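/- Let p ≥ 1 and let a(x) = x^p + a_1 x^{p−1} + … + a_p be a monic polynomial over ℂ whose roots α_1, …, α_p are pairwise distinct, with companion matrix A (the p×p matrix with ones on the superdiagonal, last row (−a_p, −a_{p−1}, …, −a_1), and zeros elsewhere). Let b(x) = b_0 + b_1 x + … + b_{p−1} x^{p−1} be a polynomial of degree at most p − 1 with coefficient vector b = (b_0, …, b_{p−1})ᵀ, and let e denote the p-th standard basis vector of ℂ^p. Then for every t ∈ ℂ, bᵀ exp(tA) e = Σ_{i=1}^p (b(α_i)/a′(α_i)) e^{α_i t}, where exp denotes the matrix exponential and a′ the derivative of a. -/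

import Mathlib

open Polynomial

/-- The companion matrix of a monic polynomial `P` of degree `p`: ones on the
superdiagonal, last row given by the negated coefficients `(−P.coeff 0, …, −P.coeff (p−1))`
(i.e. `(−a_p, −a_{p−1}, …, −a_1)` when `P(x) = x^p + a_1 x^{p−1} + … + a_p`),
zeros elsewhere. -/
noncomputable def companionMatrixOf (p : ℕ) (P : Polynomial ℂ) :
    Matrix (Fin p) (Fin p) ℂ :=
  Matrix.of fun i j =>
    if (i : ℕ) = p - 1 then -P.coeff (j : ℕ)
    else if (j : ℕ) = (i : ℕ) + 1 then 1 else 0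


/-- Evaluation of the derivative of `∏ (X - α j)` at a root `α i`. -/
lemma deriv_eval_prod_aux {p : ℕ} (α : Fin p → ℂ) (hdist : Function.Injective α) (i : Fin p) :
    (Polynomial.derivative (∏ j : Fin p, (X - C (α j)))).eval (α i) =
      ∏ j ∈ Finset.univ.erase i, (α i - α j) := by
  classical
  have hS : (∏ j : Fin p, (X - C (α j))) =
      (Multiset.map (fun c => X - C c) (Finset.univ.val.map α)).prod := by
    rw [Multiset.map_map]
    rfl
  have hmem : α i ∈ Finset.univ.val.map α :=
    Multiset.mem_map_of_mem α (Finset.mem_univ_val i)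
  rw [hS, eval_multiset_prod_X_sub_C_derivative hmem]
  have herase : (Finset.univ.val.map α).erase (α i) = (Finset.univ.erase i).val.map α := by
    rw [← Multiset.map_erase α hdist, Finset.erase_val]
  rw [herase, Multiset.map_map]
  rfl

/-- The top coefficient of the Lagrange basis polynomial. -/
lemma coeff_basis_aux {p : ℕ} (α : Fin p → ℂ) (hdist : Function.Injective α) (i : Fin p) :
    (Lagrange.basis Finset.univ α i).coeff (p - 1) =
      (∏ j ∈ Finset.univ.erase i, (α i - α j))⁻¹ := by
  classical
  have hcard : (Finset.univ : Finset (Fin p)).card = p := by simp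
  have hdeg : (Lagrange.basis Finset.univ α i).natDegree = p - 1 := by
    rw [Lagrange.natDegree_basis hdist.injOn (Finset.mem_univ i), hcard]
  have hlead : (Lagrange.basis Finset.univ α i).leadingCoeff =
      ∏ j ∈ Finset.univ.erase i, (α i - α j)⁻¹ := by
    rw [Lagrange.basis, leadingCoeff_prod]
    refine Finset.prod_congr rfl fun j hj => ?_
    have hne : α i ≠ α j := fun h => (Finset.mem_erase.mp hj).1 (hdist h).symm
    rw [Lagrange.basisDivisor, leadingCoeff_mul, leadingCoeff_C,
      (monic_X_sub_C (α j)).leadingCoeff, mul_one]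
  rw [← hdeg, Polynomial.coeff_natDegree, hlead, ← Finset.prod_inv_distrib]

/-- The Lagrange power-sum identity. -/
lemma lag_identity_aux {p : ℕ} (α : Fin p → ℂ) (hdist : Function.Injective α)
    (r : ℕ) (hr : r < p) :
    ∑ i : Fin p, α i ^ r * (∏ j ∈ Finset.univ.erase i, (α i - α j))⁻¹ =
      if r = p - 1 then 1 else 0 := by
  classical
  have hcard : (Finset.univ : Finset (Fin p)).card = p := by simp
  have hdeg : (X ^ r : ℂ[X]).degree < (Finset.univ : Finset (Fin p)).card := by
    rw [degree_X_pow, hcard]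
    exact_mod_cast hr
  have h := Lagrange.eq_interpolate (v := α) hdist.injOn hdeg
  have h2 := congrArg (fun q : ℂ[X] => q.coeff (p - 1)) h
  simp only [Lagrange.interpolate_apply, Polynomial.finset_sum_coeff, Polynomial.coeff_C_mul,
    coeff_X_pow, Polynomial.eval_pow, Polynomial.eval_X, coeff_basis_aux α hdist] at h2
  rw [← h2]
  by_cases hrp : r = p - 1 <;> simp [hrp, eq_comm]

/-- The companion matrix acts on the transposed Vandermonde matrix as the diagonal of roots. -/
lemma companion_mul_vdm {p : ℕ} (hp : 1 ≤ p) (α : Fin p → ℂ)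
    (a : Polynomial ℂ) (ha : a = ∏ i : Fin p, (X - C (α i))) :
    (Matrix.of fun i j : Fin p =>
        if (i : ℕ) = p - 1 then -a.coeff (j : ℕ)
        else if (j : ℕ) = (i : ℕ) + 1 then 1 else 0) * (Matrix.vandermonde α).transpose
      = (Matrix.vandermonde α).transpose * Matrix.diagonal α := by
  classical
  have hmonic : a.Monic := ha ▸ monic_prod_of_monic _ _ fun i _ => monic_X_sub_C (α i)
  have hnd : a.natDegree = p := by
    rw [ha, natDegree_prod _ _ fun i _ => X_sub_C_ne_zero (α i)]
    simp
  have hroot : ∀ j, a.eval (α j) = 0 := by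
    intro j
    rw [ha, eval_prod]
    exact Finset.prod_eq_zero (Finset.mem_univ j) (by simp)
  ext i j
  rw [Matrix.mul_apply, Matrix.mul_apply]
  simp only [Matrix.of_apply, Matrix.transpose_apply, Matrix.vandermonde, Matrix.diagonal,
    Matrix.of_apply]
  by_cases hi : (i : ℕ) = p - 1
  · simp only [hi, if_pos rfl]
    have heval := Polynomial.eval_eq_sum_range (x := α j) (p := a)
    rw [hnd, Finset.sum_range_succ] at heval
    have hcp : a.coeff p = 1 := by rw [← hnd]; exact hmonic.coeff_natDegree
    rw [hroot j, hcp, one_mul] at heval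
    have hsum : ∑ x : Fin p, a.coeff (x : ℕ) * α j ^ (x : ℕ) = -(α j ^ p) := by
      rw [Fin.sum_univ_eq_sum_range (fun k => a.coeff k * α j ^ k)]
      linear_combination -heval
    simp only [neg_mul, Finset.sum_neg_distrib, hsum, neg_neg, mul_ite, mul_zero,
      Finset.sum_ite_eq', Finset.mem_univ, if_true]
    rw [← pow_succ]
    congr 1
    omega
  · simp only [hi, if_neg hi]
    have hlt := i.isLt
    have hi1 : (i : ℕ) + 1 < p := by omega
    have hxk : ∀ x : Fin p, ((x : ℕ) = (i : ℕ) + 1) ↔ x = ⟨(i : ℕ) + 1, hi1⟩ := fun x => by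
      rw [Fin.ext_iff]
    simp only [if_false, hxk, ite_mul, one_mul, zero_mul, mul_ite, mul_zero,
      Finset.sum_ite_eq', Finset.mem_univ, if_true]
    rw [← pow_succ]


/-- Spectral expansion of the CARMA kernel. -/
theorem carma_spectral_expansion (p : ℕ) (hp : 1 ≤ p) (α : Fin p → ℂ)
    (hdist : Function.Injective α)
    (a : Polynomial ℂ) (ha : a = ∏ i : Fin p, (X - C (α i)))
    (b : Polynomial ℂ) (hb : b.natDegree ≤ p - 1)
    (A : Matrix (Fin p) (Fin p) ℂ) (hA : A = companionMatrixOf p a)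
    (bvec : Fin p → ℂ) (hbvec : ∀ j, bvec j = b.coeff (j : ℕ))
    (e : Fin p → ℂ) (he : ∀ j, e j = if (j : ℕ) = p - 1 then 1 else 0) :
    ∀ t : ℂ,
      dotProduct bvec ((NormedSpace.exp (t • A)).mulVec e)
        = ∑ i : Fin p, b.eval (α i) / a.derivative.eval (α i) * Complex.exp (α i * t) := by
  classical
  intro t
  set W : Matrix (Fin p) (Fin p) ℂ := (Matrix.vandermonde α).transpose with hW
  -- W is invertible
  have hdet : IsUnit W.det := by
    rw [hW, Matrix.det_transpose, Matrix.det_vandermonde]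
    rw [isUnit_iff_ne_zero]
    refine Finset.prod_ne_zero_iff.mpr fun i _ => Finset.prod_ne_zero_iff.mpr fun j hj => ?_
    have hij : i < j := Finset.mem_Ioi.mp hj
    exact sub_ne_zero_of_ne fun h => absurd (hdist h) hij.ne'
  have hWunit : IsUnit W := (Matrix.isUnit_iff_isUnit_det W).mpr hdet
  -- diagonalization
  have hAW : A * W = W * Matrix.diagonal α := by
    rw [hA]; exact companion_mul_vdm hp α a ha
  have hAdiag : A = W * Matrix.diagonal α * W⁻¹ := by
    rw [← hAW, Matrix.mul_assoc, Matrix.mul_nonsing_inv W hdet, Matrix.mul_one]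
  have htA : t • A = W * Matrix.diagonal (fun i => t * α i) * W⁻¹ := by
    rw [hAdiag,
      show Matrix.diagonal (fun i => t * α i) = t • Matrix.diagonal α by
        rw [← Matrix.diagonal_smul]; rfl,
      Matrix.mul_smul, Matrix.smul_mul]
  have hexp : NormedSpace.exp (t • A)
      = W * Matrix.diagonal (fun i => Complex.exp (t * α i)) * W⁻¹ := by
    rw [htA, Matrix.exp_conj _ _ hWunit, Matrix.exp_diagonal]
    congr 2
    rw [Pi.exp_def]
    funext i
    rw [Complex.exp_eq_exp_ℂ]
  -- the vector c of inverse derivative values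
  set c : Fin p → ℂ := fun i => (∏ j ∈ Finset.univ.erase i, (α i - α j))⁻¹ with hc
  have hWc : W.mulVec c = e := by
    funext r
    rw [Matrix.mulVec, he r]
    have := lag_identity_aux α hdist (r : ℕ) r.isLt
    rw [← this]
    rfl
  have hinv : W⁻¹.mulVec e = c := by
    rw [← hWc, Matrix.mulVec_mulVec, Matrix.nonsing_inv_mul W hdet, Matrix.one_mulVec]
  -- evaluate
  rw [hexp, ← Matrix.mulVec_mulVec, ← Matrix.mulVec_mulVec, hinv,
    Matrix.dotProduct_mulVec]
  have hbv : Matrix.vecMul bvec W = fun i => b.eval (α i) := by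
    funext i
    rw [Matrix.vecMul]
    have hblt : b.natDegree < p := by omega
    rw [Polynomial.eval_eq_sum_range' hblt (α i),
      ← Fin.sum_univ_eq_sum_range (fun k => b.coeff k * α i ^ k)]
    simp only [dotProduct, hW, Matrix.transpose_apply, Matrix.vandermonde, Matrix.of_apply,
      hbvec]
  rw [hbv]
  have hderiv : ∀ i, a.derivative.eval (α i) = ∏ j ∈ Finset.univ.erase i, (α i - α j) := by
    intro i
    rw [ha]
    exact deriv_eval_prod_aux α hdist i
  simp only [dotProduct, Matrix.mulVec_diagonal, hderiv, hc, div_eq_mul_inv]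
  refine Finset.sum_congr rfl fun i _ => ?_
  rw [mul_comm (α i) t]
  ring
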